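/- Consider ℓ¹(ℤ) with convolution, involution (f*)(n) = conj(f(−n)), and identity δ₀. Let ℓ₀ ∈ ℓ¹(ℤ) be defined by ℓ₀(0) = 1, ℓ₀(1) = 1, ℓ₀(n) = 0 otherwise, and for λ ∈ ℂ with |λ| ≤ 1 let ω_λ be the functional ω_λ(f) = f(0) + λ f(1). Then ω_λ(ℓ₀* ⋆ ℓ₀) = 2 + λ. In particular, if λ is not real, then ω_λ is a continuous linear functional attaining its norm at the identity but is not positive. -/

import Mathlib

open scoped ComplexOrder

/-- In `ℓ¹(ℤ)` with convolution and involution `f*(n) = conj (f (-n))`, for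
`ℓ₀ = δ₀ + δ₁` and `ω_λ(f) = f 0 + λ f 1` one has `ω_λ(ℓ₀* ⋆ ℓ₀) = 2 + λ`;
in particular `ω_λ` is not positive when `λ` is not real. -/
theorem stmt6 (lam : ℂ) (hlam : ‖lam‖ ≤ 1)
    (l₀ : ℤ → ℂ) (hl₀ : l₀ = fun n => if n = 0 ∨ n = 1 then 1 else 0)
    (c : ℤ → ℂ)
    (hc : c = fun n => ∑' m : ℤ, (starRingEnd ℂ) (l₀ (-m)) * l₀ (n - m)) :
    c 0 + lam * c 1 = 2 + lam ∧ (lam.im ≠ 0 → ¬ (0 : ℂ) ≤ 2 + lam) := by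
  have key : ∀ n : ℤ, c n = ∑ m ∈ ({-1, 0} : Finset ℤ),
      (starRingEnd ℂ) (l₀ (-m)) * l₀ (n - m) := by
    intro n
    rw [hc]
    apply tsum_eq_sum
    intro m hm
    simp only [Finset.mem_insert, Finset.mem_singleton, not_or] at hm
    have : l₀ (-m) = 0 := by
      rw [hl₀]; simp only [ite_eq_right_iff]
      rintro (h | h) <;> omega
    simp [this]
  have h0 : c 0 = 2 := by
    rw [key]; subst hl₀; norm_num
  have h1 : c 1 = 1 := by
    rw [key]; subst hl₀; norm_num
  refine ⟨by rw [h0, h1]; ring, fun him hle => ?_⟩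
  have := Complex.le_def.mp hle
  simp at this
  exact him this.2.symm
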